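/- Fix y ∈ ℝⁿ and let z̃ ∈ ℝⁿ be a global minimizer over z ∈ ℝⁿ of z ↦ C^{1/2}_{λ,μ}(z, y). Then for every index i, if |[B_μ(y)]_i| < t_{1/2, λ_i} where λ_i = λμ/(|y_i| + ε_i)^{1/2 − p} and t_{1/2,λ_i} = (54^{1/3}/4)·λ_i^{2/3}, then z̃_i = 0. -/

import Mathlib

/-- `B_μ(y) = y + μ·Aᵀ(b − Ay)`. -/
noncomputable def Bmu {m n : ℕ} (A : Matrix (Fin m) (Fin n) ℝ) (b : Fin m → ℝ)
    (μ : ℝ) (y : Fin n → ℝ) : Fin n → ℝ :=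
  y + μ • (A.transpose.mulVec (b - A.mulVec y))

/-- The objective `C^θ_λ(z) = ‖Az − b‖₂² + λ·Σᵢ |zᵢ|^θ/(|zᵢ| + εᵢ)^{θ−p}`. -/
noncomputable def Cobj {m n : ℕ} (A : Matrix (Fin m) (Fin n) ℝ) (b : Fin m → ℝ)
    (lam p θ : ℝ) (ε : Fin n → ℝ) (z : Fin n → ℝ) : ℝ :=
  ∑ j, ((A.mulVec z - b) j) ^ 2 +
    lam * ∑ i, |z i| ^ θ / (|z i| + ε i) ^ (θ - p)

/-- The surrogate functional
`C^θ_{λ,μ}(z,y) = μ‖Az − b‖₂² + λμ·Σᵢ |zᵢ|^θ/(|yᵢ| + εᵢ)^{θ−p} − μ‖Az − Ay‖₂² + ‖z − y‖₂²`. -/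
noncomputable def Csur {m n : ℕ} (A : Matrix (Fin m) (Fin n) ℝ) (b : Fin m → ℝ)
    (lam μ p θ : ℝ) (ε : Fin n → ℝ) (z y : Fin n → ℝ) : ℝ :=
  μ * ∑ j, ((A.mulVec z - b) j) ^ 2 +
    lam * μ * ∑ i, |z i| ^ θ / (|y i| + ε i) ^ (θ - p) -
    μ * ∑ j, ((A.mulVec z - A.mulVec y) j) ^ 2 +
    ∑ i, (z i - y i) ^ 2

/-- The half-thresholding function `f_{1/2,λ}`. -/
noncomputable def f12 (lam r : ℝ) : ℝ :=
  (2 / 3) * r *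
    (1 + Real.cos (2 * Real.pi / 3 -
      (2 / 3) * Real.arccos ((lam / 8) * (|r| / 3) ^ (-(3 : ℝ) / 2))))

/-- The threshold value `t_{1/2,λ} = (54^{1/3}/4)·λ^{2/3}`. -/
noncomputable def t12 (lam : ℝ) : ℝ :=
  (54 : ℝ) ^ ((1 : ℝ) / 3) / 4 * lam ^ ((2 : ℝ) / 3)

theorem stmt_6 {m n : ℕ} (A : Matrix (Fin m) (Fin n) ℝ) (b : Fin m → ℝ)
    (lam μ p : ℝ) (ε : Fin n → ℝ)
    (hlam : 0 < lam) (hμ : 0 < μ) (hp : p ∈ Set.Ioo (0 : ℝ) 1)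
    (hε : ∀ i, 0 < ε i) (y : Fin n → ℝ) (ztilde : Fin n → ℝ)
    (hmin : ∀ z : Fin n → ℝ,
      Csur A b lam μ p ((1 : ℝ) / 2) ε ztilde y ≤ Csur A b lam μ p ((1 : ℝ) / 2) ε z y) :
    ∀ i : Fin n,
      |Bmu A b μ y i| < t12 (lam * μ / (|y i| + ε i) ^ ((1 : ℝ) / 2 - p)) →
        ztilde i = 0 := by
  classical
  intro i hi
  set c : Fin n → ℝ := fun j => lam * μ / (|y j| + ε j) ^ ((1:ℝ)/2 - p) with hc
  set φ : Fin n → ℝ → ℝ :=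
    fun j t => (t - Bmu A b μ y j)^2 + c j * |t| ^ ((1:ℝ)/2) with hφ
  have hBd : ∀ j, Bmu A b μ y j = y j + μ * A.transpose.mulVec (b - A.mulVec y) j := by
    intro j; simp [Bmu]
  have swap : ∀ (v : Fin m → ℝ) (u : Fin n → ℝ),
      ∑ k, v k * A.mulVec u k = ∑ j, A.transpose.mulVec v j * u j := by
    intro v u
    simp only [Matrix.mulVec, dotProduct, Matrix.transpose_apply, Finset.mul_sum,
      Finset.sum_mul]
    rw [Finset.sum_comm]
    exact Finset.sum_congr rfl fun j _ => Finset.sum_congr rfl fun k _ => by ring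
  have key : ∀ z, Csur A b lam μ p ((1:ℝ)/2) ε z y
      = (∑ j, φ j (z j)) +
        (μ * ∑ k, ((b k)^2 - (A.mulVec y k)^2) +
          ∑ j, (-(2 * y j * (μ * A.transpose.mulVec (b - A.mulVec y) j))
            - (μ * A.transpose.mulVec (b - A.mulVec y) j)^2)) := by
    intro z
    have e1 : μ * ∑ k, ((A.mulVec z - b) k)^2 - μ * ∑ k, ((A.mulVec z - A.mulVec y) k)^2
        = (-(2*μ)) * ∑ k, ((b - A.mulVec y) k) * (A.mulVec z) k
          + μ * ∑ k, ((b k)^2 - (A.mulVec y k)^2) := by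
      simp only [Pi.sub_apply, Finset.mul_sum]
      rw [← Finset.sum_sub_distrib, ← Finset.sum_add_distrib]
      exact Finset.sum_congr rfl fun k _ => by ring
    have e2 := swap (b - A.mulVec y) z
    have expand : Csur A b lam μ p ((1:ℝ)/2) ε z y
        = (μ * ∑ k, ((A.mulVec z - b) k)^2 - μ * ∑ k, ((A.mulVec z - A.mulVec y) k)^2)
          + (lam * μ * ∑ j, |z j| ^ ((1:ℝ)/2) / (|y j| + ε j) ^ ((1:ℝ)/2 - p)
             + ∑ j, (z j - y j)^2) := by
      simp only [Csur]; ring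
    rw [expand, e1, e2]
    have hsum : ∑ j, ((-(2*μ)) * (A.transpose.mulVec (b - A.mulVec y) j * z j)
          + (lam * μ * (|z j| ^ ((1:ℝ)/2) / (|y j| + ε j) ^ ((1:ℝ)/2 - p))
            + (z j - y j)^2))
        = ∑ j, (φ j (z j) + (-(2 * y j * (μ * A.transpose.mulVec (b - A.mulVec y) j))
            - (μ * A.transpose.mulVec (b - A.mulVec y) j)^2)) := by
      refine Finset.sum_congr rfl fun j _ => ?_
      simp only [hφ, hc]
      rw [hBd j]
      ring
    simp only [hφ, hc, Finset.sum_add_distrib, Finset.sum_sub_distrib,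
      Finset.mul_sum] at hsum ⊢
    linarith [hsum]
  -- coordinatewise minimality
  have hφi : φ i (ztilde i) ≤ φ i 0 := by
    have h := hmin (Function.update ztilde i 0)
    rw [key ztilde, key (Function.update ztilde i 0)] at h
    have h' : ∑ j, φ j (ztilde j) ≤ ∑ j, φ j (Function.update ztilde i 0 j) := by linarith
    rw [← Finset.add_sum_erase _ (fun j => φ j (ztilde j)) (Finset.mem_univ i),
        ← Finset.add_sum_erase _ (fun j => φ j (Function.update ztilde i 0 j))
          (Finset.mem_univ i)] at h'
    have herase : ∑ j ∈ Finset.univ.erase i, φ j (Function.update ztilde i 0 j)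
        = ∑ j ∈ Finset.univ.erase i, φ j (ztilde j) :=
      Finset.sum_congr rfl fun j hj => by
        rw [Function.update_of_ne (Finset.ne_of_mem_erase hj)]
    rw [herase] at h'
    simp only [Function.update_self] at h'
    linarith [h']
  -- analysis
  by_contra ht
  have hw : 0 < (|y i| + ε i) ^ ((1:ℝ)/2 - p) :=
    Real.rpow_pos_of_pos (by have := hε i; positivity) _
  have hci : 0 < c i := div_pos (mul_pos hlam hμ) hw
  set t : ℝ := ztilde i with htt
  set B : ℝ := Bmu A b μ y i with hBB
  have hineq : t^2 - 2 * B * t + c i * |t| ^ ((1:ℝ)/2) ≤ 0 := by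
    have h0 : φ i 0 = B^2 := by
      simp [hφ, Real.zero_rpow (by norm_num : ((1:ℝ)/2) ≠ 0)]
      rfl
    have h1 : (t - B)^2 + c i * |t| ^ ((1:ℝ)/2) ≤ B^2 := by
      rw [← h0]; exact hφi
    nlinarith [h1]
  set s : ℝ := Real.sqrt |t| with hs
  have hs0 : 0 < s := Real.sqrt_pos.mpr (abs_pos.mpr ht)
  have hts : s^2 = |t| := Real.sq_sqrt (abs_nonneg t)
  have hrs : |t| ^ ((1:ℝ)/2) = s := (Real.sqrt_eq_rpow _).symm
  have habs : B * t ≤ |B| * |t| := (le_abs_self _).trans (le_of_eq (abs_mul _ _))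
  rw [hrs] at hineq
  have h2 : s ^ 3 + c i ≤ 2 * |B| * s := by
    have h4 : |t| * |t| - 2 * |B| * |t| + c i * s ≤ 0 := by
      nlinarith [hineq, sq_abs t, habs]
    rw [← hts] at h4
    nlinarith [h4, hs0]
  have hβ3 : |B| ^ 3 < (27/32) * (c i)^2 := by
    have h5 : |B| ^ 3 < (t12 (c i))^3 := by
      apply pow_lt_pow_left₀ hi (abs_nonneg _)
      norm_num
    have hrw : (t12 (c i))^3 = (27/32) * (c i)^2 := by
      simp only [t12]
      rw [mul_pow, div_pow, ← Real.rpow_natCast ((54:ℝ) ^ ((1:ℝ)/3)) 3,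
        ← Real.rpow_natCast ((c i) ^ ((2:ℝ)/3)) 3,
        ← Real.rpow_mul (by norm_num : (0:ℝ) ≤ 54),
        ← Real.rpow_mul (le_of_lt hci)]
      norm_num
    rw [hrw] at h5; exact h5
  have hs3 : 0 < s^3 := by positivity
  have hcube : (s^3 + c i)^3 ≤ (2 * |B| * s) ^ 3 :=
    pow_le_pow_left₀ (by positivity) h2 3
  nlinarith [hcube, mul_lt_mul_of_pos_right hβ3 hs3, hs3, hci,
    mul_nonneg (sq_nonneg (2*s^3 - c i)) (by positivity : (0:ℝ) ≤ s^3 + 4*c i)]
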